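/- Let λ, μ, γ be real numbers with λ + μ + γ ≠ 0, and let M(λ,μ,γ) be the 3×3 real matrix whose rows are (λ,λ,λ), (μ,μ,μ), (γ,γ,γ). If one of the following holds: (1) λ ≠ 0, μ = 0, γ = 0; (2) μ ≠ 0, λ = 0, γ = 0; (3) γ ≠ 0, λ = 0, μ = 0; then the evolution algebra E_{M(λ,μ,γ)} is isomorphic to the evolution algebra E₄ whose structure matrix has rows (1,0,0), (0,0,0), (0,0,0). -/

import Mathlib

/-- Evolution algebra multiplication on ℝ³ determined by a structure matrix `A`:
`(x ∗_A y) j = ∑ i, x i * y i * A i j`. -/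
def evolMul (A : Matrix (Fin 3) (Fin 3) ℝ) (x y : Fin 3 → ℝ) : Fin 3 → ℝ :=
  fun j => ∑ i, x i * y i * A i j

/-- The evolution algebras with structure matrices `A` and `B` are isomorphic:
there is an ℝ-linear equivalence of ℝ³ intertwining the two multiplications. -/
def EvolIso (A B : Matrix (Fin 3) (Fin 3) ℝ) : Prop :=
  ∃ f : (Fin 3 → ℝ) ≃ₗ[ℝ] (Fin 3 → ℝ),
    ∀ x y, f (evolMul A x y) = evolMul B (f x) (f y)

lemma mkIso (A B M N : Matrix (Fin 3) (Fin 3) ℝ) (h1 : M * N = 1) (h2 : N * M = 1)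
    (hmul : ∀ x y, M.mulVec (evolMul A x y) = evolMul B (M.mulVec x) (M.mulVec y)) :
    EvolIso A B := by
  refine ⟨LinearEquiv.ofLinear (Matrix.toLin' M) (Matrix.toLin' N) ?_ ?_, ?_⟩
  · rw [← Matrix.toLin'_mul, h1, Matrix.toLin'_one]
  · rw [← Matrix.toLin'_mul, h2, Matrix.toLin'_one]
  · intro x y
    simpa [Matrix.toLin'_apply] using hmul x y

theorem stmt (l m g : ℝ) (hsum : l + m + g ≠ 0)
    (h : (l ≠ 0 ∧ m = 0 ∧ g = 0) ∨ (m ≠ 0 ∧ l = 0 ∧ g = 0) ∨ (g ≠ 0 ∧ l = 0 ∧ m = 0)) :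
    EvolIso (!![l, l, l; m, m, m; g, g, g] : Matrix (Fin 3) (Fin 3) ℝ) (!![1, 0, 0; 0, 0, 0; 0, 0, 0] : Matrix (Fin 3) (Fin 3) ℝ) := by
  rcases h with ⟨hl, hm, hg⟩ | ⟨hm, hl, hg⟩ | ⟨hg, hl, hm⟩
  · subst hm; subst hg
    apply mkIso _ _ (!![l,0,0; -1,1,0; -1,0,1]) (!![1/l,0,0; 1/l,1,0; 1/l,0,1])
    · rw [Matrix.mul_fin_three, Matrix.one_fin_three]
      norm_num
      field_simp
    · rw [Matrix.mul_fin_three, Matrix.one_fin_three]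
      norm_num
      field_simp
      norm_num
    · intro x y
      funext j
      fin_cases j <;>
        simp [evolMul, Matrix.mulVec, dotProduct, Fin.sum_univ_three,
          Matrix.vecHead, Matrix.vecTail] <;> ring
  · subst hl; subst hg
    apply mkIso _ _ (!![0,m,0; 1,-1,0; 0,-1,1]) (!![1/m,1,0; 1/m,0,0; 1/m,0,1])
    · rw [Matrix.mul_fin_three, Matrix.one_fin_three]
      norm_num
      field_simp
    · rw [Matrix.mul_fin_three, Matrix.one_fin_three]
      norm_num
      field_simp
      norm_num
    · intro x y
      funext j
      fin_cases j <;>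
        simp [evolMul, Matrix.mulVec, dotProduct, Fin.sum_univ_three,
          Matrix.vecHead, Matrix.vecTail] <;> ring
  · subst hl; subst hm
    apply mkIso _ _ (!![0,0,g; 1,0,-1; 0,1,-1]) (!![1/g,1,0; 1/g,0,1; 1/g,0,0])
    · rw [Matrix.mul_fin_three, Matrix.one_fin_three]
      norm_num
      field_simp
    · rw [Matrix.mul_fin_three, Matrix.one_fin_three]
      norm_num
      field_simp
      norm_num
    · intro x y
      funext j
      fin_cases j <;>
        simp [evolMul, Matrix.mulVec, dotProduct, Fin.sum_univ_three,
          Matrix.vecHead, Matrix.vecTail] <;> ring
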